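/- For any monic polynomial p(x) of positive degree k with integer coefficients and complex roots r_1, ..., r_k whose sum equals ℓ, the average squared distance of the roots from their mean, (1/k) ∑_{i=1}^k |r_i - ℓ/k|², is at least (ℓ/k - ⌊ℓ/k⌋)(⌈ℓ/k⌉ - ℓ/k). -/

import Mathlib

open Polynomial



lemma ms_prod_le_one : ∀ (s : Multiset ℝ), (∀ x ∈ s, 0 ≤ x) → (∀ x ∈ s, x ≤ 1) → s.prod ≤ 1 := by
  intro s
  induction s using Multiset.induction with
  | empty => simp
  | cons a t ih =>
    intro h0 h1
    rw [Multiset.prod_cons]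
    have ha0 : 0 ≤ a := h0 a (Multiset.mem_cons_self a t)
    have ha1 : a ≤ 1 := h1 a (Multiset.mem_cons_self a t)
    have ht := ih (fun x hx => h0 x (Multiset.mem_cons_of_mem hx))
      (fun x hx => h1 x (Multiset.mem_cons_of_mem hx))
    have ht0 : 0 ≤ t.prod := Multiset.prod_nonneg
      (fun x hx => h0 x (Multiset.mem_cons_of_mem hx))
    nlinarith

lemma ms_amgm : ∀ (n : ℕ) (s : Multiset ℝ), s.card = n → (∀ x ∈ s, 0 ≤ x) →
    1 ≤ s.prod → (s.card : ℝ) ≤ s.sum := by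
  intro n
  induction n using Nat.strong_induction_on with
  | _ n IH =>
    intro s hcard h0 hprod
    by_cases hall : ∀ x ∈ s, 1 ≤ x
    · have := Multiset.card_nsmul_le_sum hall
      simpa [nsmul_eq_mul] using this
    · push_neg at hall
      obtain ⟨y, hy, hy1⟩ := hall
      set t := s.erase y with ht
      have hst : s = y ::ₘ t := (Multiset.cons_erase hy).symm
      have hy0 : 0 ≤ y := h0 y hy
      have ht0 : ∀ x ∈ t, 0 ≤ x := fun x hx => h0 x (hst ▸ Multiset.mem_cons_of_mem hx)
      have hprodt : 1 ≤ y * t.prod := by rwa [hst, Multiset.prod_cons] at hprod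
      have hy0' : 0 < y := by
        rcases hy0.lt_or_eq with h | h
        · exact h
        · exfalso; rw [← h] at hprodt; nlinarith
      have htp : 1 < t.prod := by
        have htp0 : 0 ≤ t.prod := Multiset.prod_nonneg ht0
        nlinarith
      have hex : ∃ x ∈ t, 1 < x := by
        by_contra hc
        push_neg at hc
        have := ms_prod_le_one t ht0 hc
        linarith
      obtain ⟨x, hx, hx1⟩ := hex
      set u := t.erase x with hu
      have htu : t = x ::ₘ u := (Multiset.cons_erase hx).symm
      have hu0 : ∀ z ∈ u, 0 ≤ z := fun z hz => ht0 z (htu ▸ Multiset.mem_cons_of_mem hz)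
      -- apply IH to (x*y) ::ₘ u
      have hcard' : ((x*y) ::ₘ u).card = n - 1 := by
        have : s.card = u.card + 2 := by rw [hst, htu]; simp
        simp only [Multiset.card_cons]
        omega
      have hn1 : n - 1 < n := by
        have : s.card = u.card + 2 := by rw [hst, htu]; simp
        omega
      have h0' : ∀ z ∈ (x*y) ::ₘ u, 0 ≤ z := by
        intro z hz
        rcases Multiset.mem_cons.mp hz with h | h
        · subst h; positivity
        · exact hu0 z h
      have hprod' : 1 ≤ ((x*y) ::ₘ u).prod := by
        rw [Multiset.prod_cons]
        have : s.prod = y * (x * u.prod) := by rw [hst, htu]; simp [Multiset.prod_cons]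
        rw [this] at hprod; nlinarith [hprod]
      have hIH := IH (n-1) hn1 ((x*y) ::ₘ u) hcard' h0' hprod'
      have hsum : s.sum = y + (x + u.sum) := by rw [hst, htu]; simp
      have hcards : (s.card : ℝ) = (u.card : ℝ) + 2 := by
        rw [hst, htu]; simp; push_cast; ring
      rw [Multiset.card_cons] at hIH
      rw [Multiset.sum_cons] at hIH
      push_cast at hIH
      rw [hsum, hcards]
      nlinarith [hIH, hx1, hy1, hy0']


lemma abs_ms_prod (s : Multiset ℂ) : ‖s.prod‖ = (s.map (‖·‖)).prod := by
  induction s using Multiset.induction with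
  | empty => simp
  | cons a t ih => simp [map_mul, ih]

lemma key (K t t' d δ S' : ℝ) (N : ℤ) (hK : 2 ≤ K)
    (ht : 0 < t) (ht1 : t < 1) (ht' : 0 ≤ t') (ht'1 : t' < 1)
    (hδ : δ = 0 ∨ δ = 1)
    (he : (K-1)*d = t - δ)
    (hN : (K-1)*t' = (K-1)*(N:ℝ) + K*t - δ)
    (hS : (K-1)*t'*(1-t') ≤ S') :
    K*t*(1-t) ≤ (δ-t)^2 + (S' + (K-1)*d^2) := by
  have hK1 : (0:ℝ) < K - 1 := by linarith
  have hδ0 : 0 ≤ δ := by rcases hδ with h|h <;> simp [h]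
  have hδ1 : δ ≤ 1 := by rcases hδ with h|h <;> simp [h]
  -- bounds on N
  have hNlb : (-2:ℝ) < (N:ℝ) := by nlinarith
  have hNub : ((N:ℝ)) < 2 := by nlinarith
  have hNlb' : (-2:ℤ) < N := by exact_mod_cast hNlb
  have hNub' : N < 2 := by exact_mod_cast hNub
  have hNcases : N = -1 ∨ N = 0 ∨ N = 1 := by omega
  -- key square identity
  have he2 : (K-1)*((K-1)*d^2) = (t-δ)^2 := by nlinarith [he]
  -- reduce to multiplied form
  rw [← mul_le_mul_iff_right₀ hK1]
  have hw0 : 0 ≤ (K-1)*t' := by positivity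
  have hw1 : (K-1)*t' < K-1 := by nlinarith
  rcases hδ with hδ'|hδ' <;> rcases hNcases with hN'|hN'|hN' <;> subst hδ' <;>
    subst hN' <;> push_cast at hN <;>
    nlinarith [hS, hN, he2, hw0, hw1, mul_le_mul_of_nonneg_left hS (le_of_lt hK1)]

lemma aux (s : Multiset ℂ) : ∀ (ℓ : ℤ),
    (∀ n : ℕ, ∃ z : ℤ, ((s.map (fun w => X - C w)).prod.coeff n = (z : ℂ))) →
    s.sum = (ℓ : ℂ) →
    (s.card : ℝ) * Int.fract ((ℓ:ℝ)/(s.card:ℝ)) * (1 - Int.fract ((ℓ:ℝ)/(s.card:ℝ))) ≤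
      (s.map (fun z => ‖z - (((ℓ:ℝ)/(s.card:ℝ) : ℝ) : ℂ)‖ ^ 2)).sum := by
  induction s using Multiset.strongInductionOn with
  | _ s IH =>
  intro ℓ hint hsum
  set k := s.card with hk
  set μ : ℝ := (ℓ:ℝ)/(k:ℝ) with hμ
  set t : ℝ := Int.fract μ with htdef
  have hsum_nonneg : (0:ℝ) ≤ (s.map (fun z => ‖z - (μ:ℂ)‖ ^ 2)).sum := by
    apply Multiset.sum_nonneg
    intro x hx
    obtain ⟨z, _, rfl⟩ := Multiset.mem_map.mp hx
    positivity
  rcases eq_or_lt_of_le (Int.fract_nonneg μ) with ht0 | ht0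
  · rw [← htdef] at ht0
    rw [← ht0]
    simpa using hsum_nonneg
  -- t > 0
  rw [← htdef] at ht0
  have hk2 : 2 ≤ k := by
    by_contra h
    push_neg at h
    interval_cases k
    · have : t = 0 := by rw [htdef, hμ]; norm_num
      linarith
    · have : t = 0 := by
        rw [htdef, hμ]
        norm_num [Int.fract_intCast]
      linarith
  have hK2 : (2:ℝ) ≤ (k:ℝ) := by exact_mod_cast hk2
  have hKμ : (k:ℝ) * μ = (ℓ:ℝ) := by
    rw [hμ]; field_simp
  have ht1 : t < 1 := Int.fract_lt_one μ
  have hK0 : (0:ℝ) < (k:ℝ) := by linarith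
  -- the polynomial and its integer lift
  set P : ℂ[X] := (s.map (fun w => X - C w)).prod with hP
  obtain ⟨P₀, hP₀⟩ : ∃ q : ℤ[X], q.map (Int.castRingHom ℂ) = P := by
    rw [← Polynomial.mem_lifts]
    rw [Polynomial.lifts_iff_coeff_lifts]
    intro n
    obtain ⟨z, hz⟩ := hint n
    exact ⟨z, by simpa using hz.symm⟩
  have heval : ∀ c : ℤ, P.eval (c:ℂ) = ((P₀.eval c : ℤ) : ℂ) := by
    intro c
    rw [← hP₀, Polynomial.eval_intCast_map]
    rfl
  have hevalprod : ∀ c : ℤ, P.eval (c:ℂ) = (s.map (fun w => (c:ℂ) - w)).prod := by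
    intro c
    rw [hP, Polynomial.eval_multiset_prod, Multiset.map_map]
    congr 1
    ext w
    simp
  set a : ℤ := ⌊μ⌋ with ha
  have hμA : μ = (a:ℝ) + t := by rw [htdef, Int.fract, ha]; ring
  -- Root-removal case, for c = a or c = a+1
  have hrem : ∀ c : ℤ, ((c:ℝ) - (a:ℝ) = 0 ∨ (c:ℝ) - (a:ℝ) = 1) → P₀.eval c = 0 →
      (k:ℝ) * t * (1 - t) ≤ (s.map (fun z => ‖z - (μ:ℂ)‖ ^ 2)).sum := by
    intro c hδcase hc0
    have hPc : (s.map (fun w => (c:ℂ) - w)).prod = 0 := by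
      rw [← hevalprod, heval c, hc0]; simp
    obtain ⟨w, hw, hw0⟩ := Multiset.mem_map.mp (Multiset.prod_eq_zero_iff.mp hPc)
    have hwc : (c:ℂ) ∈ s := by
      have : w = (c:ℂ) := by linear_combination -hw0
      rwa [this] at hw
    set s' := s.erase ((c:ℤ):ℂ) with hs'
    have hss : s = ((c:ℤ):ℂ) ::ₘ s' := (Multiset.cons_erase hwc).symm
    have hlt : s' < s := Multiset.erase_lt.mpr hwc
    obtain ⟨Q₀, hQ₀⟩ := Polynomial.dvd_iff_isRoot.mpr hc0
    have hmapQ : (s'.map (fun w => X - C w)).prod = Q₀.map (Int.castRingHom ℂ) := by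
      have h1 : P = (X - C ((c:ℤ):ℂ)) * (s'.map (fun w => X - C w)).prod := by
        rw [hP]
        conv_lhs => rw [hss]
        simp [Multiset.map_cons, Multiset.prod_cons]
      have h2 : P = (X - C ((c:ℤ):ℂ)) * Q₀.map (Int.castRingHom ℂ) := by
        rw [← hP₀, hQ₀, Polynomial.map_mul]
        simp
      exact mul_left_cancel₀ (Polynomial.X_sub_C_ne_zero _) (h1.symm.trans h2)
    have hint' : ∀ n : ℕ, ∃ z : ℤ, ((s'.map (fun w => X - C w)).prod.coeff n = (z : ℂ)) := by
      intro n
      exact ⟨Q₀.coeff n, by rw [hmapQ, Polynomial.coeff_map]; rfl⟩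
    have hsum' : s'.sum = ((ℓ - c : ℤ) : ℂ) := by
      have h := hsum
      rw [hss, Multiset.sum_cons] at h
      push_cast
      push_cast at h
      linear_combination h
    have hIH := IH s' hlt (ℓ - c) hint' hsum'
    -- cards
    have hcard' : (s'.card : ℝ) = (k:ℝ) - 1 := by
      have : k = s'.card + 1 := by rw [hk, hss]; simp
      rw [this]; push_cast; ring
    set μ' : ℝ := ((ℓ - c : ℤ):ℝ)/(s'.card:ℝ) with hμ'
    set t' : ℝ := Int.fract μ' with ht'def
    set S' : ℝ := (s'.map (fun z => ‖z - ((μ':ℝ):ℂ)‖ ^ 2)).sum with hS'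
    have hIH2 : ((k:ℝ)-1) * t' * (1 - t') ≤ S' := by
      rw [← hcard']
      exact hIH
    have hμ'K : ((k:ℝ)-1) * μ' = (ℓ:ℝ) - (c:ℝ) := by
      rw [hμ', ← hcard']
      have hc : (s'.card : ℝ) ≠ 0 := by rw [hcard']; linarith
      field_simp
      push_cast; ring
    -- real part sum
    set R' : ℝ := (s'.map Complex.re).sum with hR'def
    have hR' : R' = (ℓ:ℝ) - (c:ℝ) := by
      have h2 := map_multiset_sum Complex.reAddGroupHom s'
      simp only [Complex.reAddGroupHom, AddMonoidHom.coe_mk, ZeroHom.coe_mk] at h2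
      rw [hR'def, ← h2, hsum']
      push_cast
      simp
    -- pointwise identity
    have hpt : ∀ z : ℂ, ‖z - ((μ:ℝ):ℂ)‖^2 =
        ‖z - ((μ':ℝ):ℂ)‖^2 + ((2*(μ'-μ)) * z.re + (μ^2 - μ'^2)) := by
      intro z
      rw [Complex.sq_norm, Complex.sq_norm, Complex.normSq_apply, Complex.normSq_apply]
      simp only [Complex.sub_re, Complex.sub_im, Complex.ofReal_re, Complex.ofReal_im]
      ring
    have hconst : (s'.map (fun _ : ℂ => μ^2 - μ'^2)).sum = (s'.card:ℝ) * (μ^2 - μ'^2) := by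
      simp [Multiset.map_const', Multiset.sum_replicate, nsmul_eq_mul]
    have hdecomp : (s'.map (fun z => ‖z - ((μ:ℝ):ℂ)‖^2)).sum
        = S' + ((2*(μ'-μ)) * R' + ((k:ℝ)-1) * (μ^2 - μ'^2)) := by
      rw [Multiset.map_congr rfl (fun z _ => hpt z)]
      rw [Multiset.sum_map_add, Multiset.sum_map_add, Multiset.sum_map_mul_left, hconst, hcard']
    have hcross : (2*(μ'-μ)) * R' + ((k:ℝ)-1) * (μ^2 - μ'^2) = ((k:ℝ)-1) * (μ'-μ)^2 := by
      linear_combination (2*(μ'-μ))*hR' - (2*(μ'-μ))*hμ'K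
    have hfc : ‖((c:ℤ):ℂ) - ((μ:ℝ):ℂ)‖^2 = (((c:ℝ) - (a:ℝ)) - t)^2 := by
      have : (((c:ℤ):ℂ) - ((μ:ℝ):ℂ)) = ((((c:ℝ) - μ : ℝ)):ℂ) := by push_cast; ring
      rw [this, Complex.sq_norm, Complex.normSq_ofReal, hμA]
      ring
    have hsplit : (s.map (fun z => ‖z - ((μ:ℝ):ℂ)‖ ^ 2)).sum
        = (((c:ℝ) - (a:ℝ)) - t)^2 + (S' + ((k:ℝ)-1) * (μ'-μ)^2) := by
      conv_lhs => rw [hss]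
      rw [Multiset.map_cons, Multiset.sum_cons, hfc, hdecomp, hcross]
    rw [hsplit]
    -- apply key lemma
    have he : ((k:ℝ)-1)*(μ'-μ) = t - ((c:ℝ) - (a:ℝ)) := by
      have : ((k:ℝ)-1)*μ = (k:ℝ)*μ - μ := by ring
      linear_combination hμ'K - hKμ + hμA
    have hNN : ((k:ℝ)-1)*t' = ((k:ℝ)-1)*(((a - ⌊μ'⌋ : ℤ)):ℝ) + (k:ℝ)*t - ((c:ℝ) - (a:ℝ)) := by
      have ht'e : t' = μ' - (⌊μ'⌋:ℝ) := by rw [ht'def, Int.fract]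
      push_cast
      linear_combination hμ'K + ((k:ℝ)-1)*ht'e - hKμ + (k:ℝ)*hμA
    exact key (k:ℝ) t t' (μ'-μ) ((c:ℝ)-(a:ℝ)) S' (a - ⌊μ'⌋) hK2 ht0 ht1
      (Int.fract_nonneg μ') (Int.fract_lt_one μ') hδcase he hNN hIH2
  by_cases hA : P₀.eval a = 0
  · exact hrem a (Or.inl (by ring)) hA
  by_cases hB : P₀.eval (a+1) = 0
  · exact hrem (a+1) (Or.inr (by push_cast; ring)) hB
  -- AM-GM case
  set u : ℝ := 1 - t with hu
  set A : ℝ := (a:ℝ) with hA'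
  have habsa : 1 ≤ ‖P.eval ((a:ℤ):ℂ)‖ := by
    rw [heval a, Complex.norm_intCast]
    exact_mod_cast Int.one_le_abs hA
  have habsb : 1 ≤ ‖P.eval ((a+1:ℤ):ℂ)‖ := by
    rw [heval (a+1), Complex.norm_intCast]
    exact_mod_cast Int.one_le_abs hB
  set g : ℂ → ℝ := fun z => ‖((a:ℤ):ℂ) - z‖ * ‖((a+1:ℤ):ℂ) - z‖ with hg
  have hgprod : 1 ≤ (s.map g).prod := by
    have h1 : (s.map g).prod = ‖(s.map (fun z => ((a:ℤ):ℂ) - z)).prod‖ *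
        ‖(s.map (fun z => ((a+1:ℤ):ℂ) - z)).prod‖ := by
      rw [abs_ms_prod, abs_ms_prod, Multiset.map_map, Multiset.map_map, ← Multiset.prod_map_mul]
      rfl
    rw [h1, ← hevalprod, ← hevalprod]
    nlinarith [habsa, habsb, norm_nonneg (P.eval ((a:ℤ):ℂ))]
  have hsumg : (k:ℝ) ≤ (s.map g).sum := by
    have h := ms_amgm (s.map g).card (s.map g) rfl ?_ hgprod
    · rwa [Multiset.card_map] at h
    · intro x hx
      obtain ⟨z, _, rfl⟩ := Multiset.mem_map.mp hx
      positivity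
  have hptw : ∀ z ∈ s, 2 * g z ≤ (fun z : ℂ => 2 * ‖z - ((μ:ℝ):ℂ)‖^2 +
      ((2*(t-u))*z.re + (t^2 + u^2 - 2*(t-u)*μ))) z := by
    intro z _
    have hx : ‖((a:ℤ):ℂ) - z‖^2 = (A - z.re)^2 + z.im^2 := by
      rw [Complex.sq_norm, Complex.normSq_apply]
      simp only [Complex.sub_re, Complex.sub_im, Complex.intCast_re, Complex.intCast_im]
      rw [hA']; ring
    have hy : ‖((a+1:ℤ):ℂ) - z‖^2 = (A + 1 - z.re)^2 + z.im^2 := by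
      rw [Complex.sq_norm, Complex.normSq_apply]
      simp only [Complex.sub_re, Complex.sub_im, Complex.intCast_re, Complex.intCast_im]
      rw [hA']; push_cast; ring
    have hf : ‖z - ((μ:ℝ):ℂ)‖^2 = (z.re - μ)^2 + z.im^2 := by
      rw [Complex.sq_norm, Complex.normSq_apply]
      simp only [Complex.sub_re, Complex.sub_im, Complex.ofReal_re, Complex.ofReal_im]
      ring
    have hsq := sq_nonneg (‖((a:ℤ):ℂ) - z‖ - ‖((a+1:ℤ):ℂ) - z‖)
    have hμAt : μ = A + t := by rw [hA']; exact hμA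
    simp only [hg]
    nlinarith [hsq, hx, hy, hf, hμAt, hu]
  have hsum_ptw := Multiset.sum_map_le_sum_map _ _ hptw
  have hL : (s.map (fun z => 2 * g z)).sum = 2 * (s.map g).sum := Multiset.sum_map_mul_left
  have hR : (s.map Complex.re).sum = (ℓ:ℝ) := by
    have h2 := map_multiset_sum Complex.reAddGroupHom s
    simp only [Complex.reAddGroupHom, AddMonoidHom.coe_mk, ZeroHom.coe_mk] at h2
    rw [← h2, hsum]
    simp
  have hconst : (s.map (fun _ : ℂ => t^2 + u^2 - 2*(t-u)*μ)).sum
      = (k:ℝ) * (t^2 + u^2 - 2*(t-u)*μ) := by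
    simp [Multiset.map_const', Multiset.sum_replicate, nsmul_eq_mul]
    left; exact hk.symm
  have hRHS : (s.map (fun z : ℂ => 2 * ‖z - ((μ:ℝ):ℂ)‖^2 +
      ((2*(t-u))*z.re + (t^2 + u^2 - 2*(t-u)*μ)))).sum
      = 2 * (s.map (fun z => ‖z - ((μ:ℝ):ℂ)‖^2)).sum
        + ((2*(t-u))*(ℓ:ℝ) + (k:ℝ) * (t^2 + u^2 - 2*(t-u)*μ)) := by
    rw [Multiset.sum_map_add, Multiset.sum_map_add, Multiset.sum_map_mul_left,
      Multiset.sum_map_mul_left, hconst, hR]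
  rw [hL, hRHS] at hsum_ptw
  set SS := (s.map (fun z => ‖z - ((μ:ℝ):ℂ)‖^2)).sum with hSS
  set G := (s.map g).sum with hG
  have h5 : 2*(t-u)*(ℓ:ℝ) + (k:ℝ)*(t^2 + u^2 - 2*(t-u)*μ) = (k:ℝ)*(t^2+u^2) := by
    linear_combination (-2*(t-u))*hKμ
  have h6 : 2*(k:ℝ) ≤ 2*SS + (k:ℝ)*(t^2+u^2) := by linarith
  have h7 : (k:ℝ)*t*u + (k:ℝ)/2 = (k:ℝ) - (k:ℝ)*(t^2+u^2)/2 := by rw [hu]; ring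
  clear_value SS G u t μ
  linarith [h6, h7, hK0]


/-- For any monic polynomial of positive degree `k` with integer coefficients
and complex roots `r 1, ..., r k` summing to `ℓ`, the average squared distance
of the roots from their mean is at least `(ℓ/k - ⌊ℓ/k⌋)(⌈ℓ/k⌉ - ℓ/k)`. -/
theorem stmt0 (k : ℕ) (hk : 1 ≤ k) (r : Fin k → ℂ)
    (hint : ∀ i : ℕ, ∃ z : ℤ, (∏ j, (X - C (r j))).coeff i = (z : ℂ))
    (ℓ : ℤ) (hsum : ∑ i, r i = (ℓ : ℂ)) :
    ((ℓ : ℝ) / k - ⌊(ℓ : ℝ) / k⌋) * (⌈(ℓ : ℝ) / k⌉ - (ℓ : ℝ) / k) ≤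
      (1 / (k : ℝ)) * ∑ i, ‖r i - (((ℓ : ℝ) / k : ℝ) : ℂ)‖ ^ 2 := by
  set s : Multiset ℂ := Multiset.map r Finset.univ.val with hsdef
  have hcard : s.card = k := by simp [hsdef]
  have hprod : (s.map (fun w => X - C w)).prod = ∏ j, (X - C (r j)) := by
    rw [hsdef, Multiset.map_map, Finset.prod]
    rfl
  have hsum' : s.sum = (ℓ:ℂ) := by
    rw [hsdef, ← hsum, Finset.sum]
  have h := aux s ℓ (by rw [hprod]; exact hint) hsum'
  rw [hcard] at h
  set μ : ℝ := (ℓ:ℝ)/(k:ℝ) with hμ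
  have hsum2 : (s.map (fun z => ‖z - ((μ:ℝ):ℂ)‖^2)).sum
      = ∑ i, ‖r i - ((μ:ℝ):ℂ)‖ ^ 2 := by
    rw [hsdef, Multiset.map_map, Finset.sum]
    rfl
  rw [hsum2] at h
  have hk0 : (0:ℝ) < (k:ℝ) := by
    have : (1:ℕ) ≤ k := hk
    exact_mod_cast Nat.lt_of_lt_of_le Nat.zero_lt_one this
  have hfract : μ - (⌊μ⌋:ℝ) = Int.fract μ := (Int.self_sub_floor μ).symm
  rcases eq_or_lt_of_le (Int.fract_nonneg μ) with h0 | h0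
  · rw [hfract, ← h0]
    have hpos : (0:ℝ) ≤ (1 / (k : ℝ)) * ∑ i, ‖r i - ((μ:ℝ):ℂ)‖ ^ 2 := by
      apply mul_nonneg (by positivity)
      apply Finset.sum_nonneg
      intro i _
      positivity
    simpa using hpos
  · have hceil : (⌈μ⌉:ℝ) = μ + 1 - Int.fract μ :=
      Int.ceil_eq_add_one_sub_fract (by linarith)
    rw [hfract, hceil]
    have hgoal : Int.fract μ * (1 - Int.fract μ) ≤
        (1 / (k : ℝ)) * ∑ i, ‖r i - ((μ:ℝ):ℂ)‖ ^ 2 := by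
      rw [one_div, inv_mul_eq_div, le_div_iff₀ hk0]
      nlinarith [h]
    calc Int.fract μ * (μ + 1 - Int.fract μ - μ) = Int.fract μ * (1 - Int.fract μ) := by ring
      _ ≤ _ := hgoal
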